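/- Let (X,d) be a metric space, θ=(k_r) a lacunary sequence, f any unbounded modulus function, (A_k) a sequence in CL(X) and A ∈ CL(X). If (A_k) is Wijsman θ-lacunary f-statistically convergent to A, then (A_k) is Wijsman θ-lacunary statistically convergent to A. -/
import Mathlib


open Filter Metric Set

/-- `f : ℝ → ℝ` is an (unbounded) modulus function (considered on `[0,∞)`):
`f x = 0 ↔ x = 0`, subadditive, increasing, continuous from the right at `0`,
and unbounded. -/
def IsModulus (f : ℝ → ℝ) : Prop :=
  (∀ x ∈ Set.Ici (0:ℝ), 0 ≤ f x) ∧
  (∀ x ∈ Set.Ici (0:ℝ), (f x = 0 ↔ x = 0)) ∧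
  (∀ x ∈ Set.Ici (0:ℝ), ∀ y ∈ Set.Ici (0:ℝ), f (x + y) ≤ f x + f y) ∧
  MonotoneOn f (Set.Ici (0:ℝ)) ∧
  ContinuousWithinAt f (Set.Ici (0:ℝ)) 0 ∧
  (∀ M : ℝ, ∃ x ∈ Set.Ici (0:ℝ), M < f x)

/-- `φ(ε) = limsup_n f(nε)/f(n)`. -/
noncomputable def modPhi (f : ℝ → ℝ) (ε : ℝ) : ℝ :=
  Filter.limsup (fun n : ℕ => f ((n : ℝ) * ε) / f (n : ℝ)) Filter.atTop

/-- A modulus function is compatible if `φ(ε) → 0` as `ε → 0⁺`. -/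
def Compatible (f : ℝ → ℝ) : Prop :=
  Filter.Tendsto (modPhi f) (nhdsWithin 0 (Set.Ioi 0)) (nhds 0)

/-- Wijsman statistical convergence of a sequence of subsets of a metric space. -/
def WijsmanStatConv {X : Type*} [MetricSpace X] (A : ℕ → Set X) (B : Set X) : Prop :=
  ∀ x : X, ∀ ε > (0:ℝ),
    Filter.Tendsto (fun n : ℕ =>
      (((Finset.range n).filter
        (fun j => ε < |infDist x (A j) - infDist x B|)).card : ℝ) / (n : ℝ))
      Filter.atTop (nhds 0)

/-- Wijsman `f`-statistical convergence of a sequence of subsets of a metric space. -/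
def WijsmanFStatConv {X : Type*} [MetricSpace X] (f : ℝ → ℝ) (A : ℕ → Set X)
    (B : Set X) : Prop :=
  ∀ x : X, ∀ ε > (0:ℝ),
    Filter.Tendsto (fun n : ℕ =>
      f ((((Finset.range n).filter
        (fun j => ε < |infDist x (A j) - infDist x B|)).card : ℝ)) / f (n : ℝ))
      Filter.atTop (nhds 0)

/-- A real sequence is `f`-strong Cesàro convergent to `L`. -/
def FStrongCesaro (f : ℝ → ℝ) (x : ℕ → ℝ) (L : ℝ) : Prop :=
  Filter.Tendsto (fun n : ℕ =>
    f (∑ j ∈ Finset.range n, |x j - L|) / f (n : ℝ)) Filter.atTop (nhds 0)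

/-- Wijsman `f`-strong Cesàro convergence. -/
def WijsmanFStrongCesaro {X : Type*} [MetricSpace X] (f : ℝ → ℝ) (A : ℕ → Set X)
    (B : Set X) : Prop :=
  ∀ x : X, FStrongCesaro f (fun j => infDist x (A j)) (infDist x B)

/-- Wijsman strong Cesàro convergence (the case `f = id`). -/
def WijsmanStrongCesaro {X : Type*} [MetricSpace X] (A : ℕ → Set X) (B : Set X) : Prop :=
  ∀ x : X,
    Filter.Tendsto (fun n : ℕ =>
      (∑ j ∈ Finset.range n, |infDist x (A j) - infDist x B|) / (n : ℝ))
      Filter.atTop (nhds 0)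

/-- A real sequence is uniformly integrable. -/
def UnifIntegrable (x : ℕ → ℝ) : Prop :=
  Filter.Tendsto (fun c : ℝ =>
    ⨆ n : ℕ, (∑ j ∈ Finset.range n, if c ≤ |x j| then |x j| else 0) / (n : ℝ))
    Filter.atTop (nhds 0)

/-- Wijsman uniform integrability. -/
def WijsmanUnifIntegrable {X : Type*} [MetricSpace X] (A : ℕ → Set X) : Prop :=
  ∀ x : X, UnifIntegrable (fun j => infDist x (A j))

/-- A lacunary sequence: strictly increasing, starting at `0`,
with gaps `h_r = k_{r+1} - k_r → ∞`. -/
def IsLacunary (k : ℕ → ℕ) : Prop :=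
  k 0 = 0 ∧ StrictMono k ∧
    Filter.Tendsto (fun r : ℕ => k (r + 1) - k r) Filter.atTop Filter.atTop

/-- The gaps `h_r` of a lacunary sequence. -/
def lacH (k : ℕ → ℕ) (r : ℕ) : ℕ := k (r + 1) - k r

/-- The blocks `I_r = (k_r, k_{r+1}]` of a lacunary sequence. -/
def lacI (k : ℕ → ℕ) (r : ℕ) : Finset ℕ := Finset.Ioc (k r) (k (r + 1))

/-- `φ_θ(ε) = limsup_t f(h_t ε)/f(h_t)`. -/
noncomputable def modPhiTheta (f : ℝ → ℝ) (k : ℕ → ℕ) (ε : ℝ) : ℝ :=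
  Filter.limsup (fun t : ℕ => f ((lacH k t : ℝ) * ε) / f ((lacH k t : ℝ))) Filter.atTop

/-- `f` is `θ`-compatible if `φ_θ(ε) → 0` as `ε → 0⁺`. -/
def ThetaCompatible (f : ℝ → ℝ) (k : ℕ → ℕ) : Prop :=
  Filter.Tendsto (modPhiTheta f k) (nhdsWithin 0 (Set.Ioi 0)) (nhds 0)

/-- Wijsman `θ`-lacunary statistical convergence. -/
def WijsmanLacStatConv {X : Type*} [MetricSpace X] (k : ℕ → ℕ) (A : ℕ → Set X)
    (B : Set X) : Prop :=
  ∀ x : X, ∀ ε > (0:ℝ),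
    Filter.Tendsto (fun r : ℕ =>
      (((lacI k r).filter
        (fun j => ε < |infDist x (A j) - infDist x B|)).card : ℝ) / (lacH k r : ℝ))
      Filter.atTop (nhds 0)

/-- Wijsman `θ`-lacunary `f`-statistical convergence. -/
def WijsmanLacFStatConv {X : Type*} [MetricSpace X] (f : ℝ → ℝ) (k : ℕ → ℕ)
    (A : ℕ → Set X) (B : Set X) : Prop :=
  ∀ x : X, ∀ ε > (0:ℝ),
    Filter.Tendsto (fun r : ℕ =>
      f ((((lacI k r).filter
        (fun j => ε < |infDist x (A j) - infDist x B|)).card : ℝ)) / f ((lacH k r : ℝ)))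
      Filter.atTop (nhds 0)

/-- Wijsman `θ`-lacunary `f`-strong Cesàro convergence. -/
def WijsmanLacFStrongCesaro {X : Type*} [MetricSpace X] (f : ℝ → ℝ) (k : ℕ → ℕ)
    (A : ℕ → Set X) (B : Set X) : Prop :=
  ∀ x : X,
    Filter.Tendsto (fun r : ℕ =>
      f (∑ j ∈ lacI k r, |infDist x (A j) - infDist x B|) / f ((lacH k r : ℝ)))
      Filter.atTop (nhds 0)

/-- Wijsman `θ`-lacunary strong Cesàro convergence (the case `f = id`). -/
def WijsmanLacStrongCesaro {X : Type*} [MetricSpace X] (k : ℕ → ℕ)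
    (A : ℕ → Set X) (B : Set X) : Prop :=
  ∀ x : X,
    Filter.Tendsto (fun r : ℕ =>
      (∑ j ∈ lacI k r, |infDist x (A j) - infDist x B|) / (lacH k r : ℝ))
      Filter.atTop (nhds 0)

/-- A real sequence is `θ`-lacunary uniformly integrable. -/
def LacUnifIntegrable (k : ℕ → ℕ) (x : ℕ → ℝ) : Prop :=
  Filter.Tendsto (fun M : ℝ =>
    ⨆ t : ℕ, (∑ j ∈ lacI k t, if M ≤ |x j| then |x j| else 0) / (lacH k t : ℝ))
    Filter.atTop (nhds 0)

/-- Wijsman `θ`-lacunary uniform integrability. -/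
def WijsmanLacUnifIntegrable {X : Type*} [MetricSpace X] (k : ℕ → ℕ)
    (A : ℕ → Set X) : Prop :=
  ∀ x : X, LacUnifIntegrable k (fun j => infDist x (A j))


lemma modulus_nsmul {f : ℝ → ℝ} (hf : IsModulus f) :
    ∀ (n : ℕ) (y : ℝ), 0 ≤ y → f ((n : ℝ) * y) ≤ (n : ℝ) * f y := by
  intro n y hy
  induction n with
  | zero =>
    have h0 : f 0 = 0 := (hf.2.1 0 (Set.mem_Ici.mpr le_rfl)).mpr rfl
    simp [h0]
  | succ n ih =>
    have hny : (0:ℝ) ≤ (n : ℝ) * y := by positivity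
    calc f (((n+1 : ℕ) : ℝ) * y) = f ((n : ℝ) * y + y) := by push_cast; ring_nf
      _ ≤ f ((n : ℝ) * y) + f y := hf.2.2.1 _ hny _ hy
      _ ≤ (n : ℝ) * f y + f y := by linarith
      _ = ((n+1 : ℕ) : ℝ) * f y := by push_cast; ring


theorem wijsman_lac_fstat_imp_lac_stat {X : Type*} [MetricSpace X]
    (k : ℕ → ℕ) (hk : IsLacunary k) (f : ℝ → ℝ) (hf : IsModulus f)
    (A : ℕ → Set X) (B : Set X)
    (hA : ∀ n, (A n).Nonempty ∧ IsClosed (A n)) (hB : B.Nonempty ∧ IsClosed B)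
    (h : WijsmanLacFStatConv f k A B) : WijsmanLacStatConv k A B := by
  intro x ε hε
  have hten := h x ε hε
  set c : ℕ → ℕ := fun r =>
    ((lacI k r).filter (fun j => ε < |infDist x (A j) - infDist x B|)).card with hc
  rw [Metric.tendsto_atTop]
  intro δ hδ
  set m : ℕ := max 1 ⌈1/δ⌉₊ with hm
  have hm1 : (1:ℝ) ≤ (m:ℝ) := by exact_mod_cast le_max_left 1 ⌈1/δ⌉₊
  have hm0 : (0:ℝ) < (m:ℝ) := lt_of_lt_of_le one_pos hm1
  have hm2 : 1/δ ≤ (m:ℝ) :=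
    le_trans (Nat.le_ceil _) (by exact_mod_cast le_max_right 1 ⌈1/δ⌉₊)
  have hsmall : (0:ℝ) < 1/((m:ℝ)+1) := by positivity
  have h2 : ∀ᶠ r in Filter.atTop,
      f ((c r : ℝ)) / f ((lacH k r : ℝ)) < 1/((m:ℝ)+1) :=
    hten.eventually_lt_const hsmall
  have h3 : ∀ᶠ r in Filter.atTop, 1 ≤ lacH k r := hk.2.2.eventually_ge_atTop 1
  obtain ⟨N, hN⟩ := (h2.and h3).exists_forall_of_atTop
  refine ⟨N, fun r hr => ?_⟩
  obtain ⟨hflt, hhr⟩ := hN r hr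
  have hhr0 : (0:ℝ) < (lacH k r : ℝ) := by exact_mod_cast hhr
  rw [Real.dist_eq, sub_zero, abs_of_nonneg (by positivity)]
  rw [div_lt_iff₀ hhr0]
  by_contra hcon
  push_neg at hcon
  have hc0 : (0:ℝ) < (c r : ℝ) := lt_of_lt_of_le (by positivity) hcon
  have hle : (lacH k r : ℝ) ≤ (m:ℝ) * (c r : ℝ) := by
    have h4 : (lacH k r : ℝ) ≤ (c r : ℝ) / δ := by
      rw [le_div_iff₀ hδ]; linarith [hcon]
    calc (lacH k r : ℝ) ≤ (c r : ℝ) / δ := h4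
      _ = (1/δ) * (c r : ℝ) := by ring
      _ ≤ (m:ℝ) * (c r : ℝ) := by nlinarith
  have hfle : f ((lacH k r : ℝ)) ≤ (m:ℝ) * f ((c r : ℝ)) := by
    calc f ((lacH k r : ℝ)) ≤ f ((m:ℝ) * (c r : ℝ)) :=
        hf.2.2.2.1 (le_of_lt hhr0) (Set.mem_Ici.mpr (by positivity)) hle
      _ ≤ (m:ℝ) * f ((c r : ℝ)) := modulus_nsmul hf m _ (le_of_lt hc0)
  have hfh0 : 0 < f ((lacH k r : ℝ)) := by
    rcases lt_or_eq_of_le (hf.1 _ (le_of_lt hhr0)) with h' | h'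
    · exact h'
    · exact absurd ((hf.2.1 _ (le_of_lt hhr0)).mp h'.symm) (ne_of_gt hhr0)
  have hrat : 1/((m:ℝ)) ≤ f ((c r : ℝ)) / f ((lacH k r : ℝ)) := by
    rw [le_div_iff₀ hfh0, one_div, inv_mul_le_iff₀ hm0]
    exact hfle
  have : 1/((m:ℝ)+1) < 1/((m:ℝ)) := by
    apply one_div_lt_one_div_of_lt hm0; linarith
  linarith
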